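/- For every m ≥ 0 and λ a nonzero rational, E_m(x) = λ^{-m} ∑_{n=0}^m Ch_{n,λ}(x) S₂(m,n), where E_m(x) are the Euler polynomials and Ch_{n,λ}(x) are the λ-Changhee polynomials. -/

import Mathlib

open Finset Polynomial

/-- Stirling numbers of the second kind. -/
noncomputable def stirling2 (m n : ℕ) : ℚ :=
  (∑ j ∈ Finset.range (n + 1), (-1) ^ (n - j) * (n.choose j : ℚ) * (j : ℚ) ^ m) /
    (n.factorial : ℚ)

namespace ChangheeAux

open Nat Function fwdDiff

/-- the function `a ↦ a^m` on `ℕ`, valued in `ℚ`. -/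
def fq (m : ℕ) : ℕ → ℚ := fun a => (a : ℚ) ^ m

/-- iterated forward difference of `fq m` at 0. -/
noncomputable def T (m r : ℕ) : ℚ := (fwdDiff 1)^[r] (fq m) 0

lemma T_eq (m r : ℕ) :
    T m r = ∑ j ∈ Finset.range (r + 1), (-1) ^ (r - j) * (r.choose j : ℚ) * (j : ℚ) ^ m := by
  rw [T, fwdDiff_iter_eq_sum_shift]
  apply Finset.sum_congr rfl
  intro j hj
  simp only [smul_eq_mul, mul_one, zero_add, zsmul_eq_mul, fq]
  push_cast
  ring

lemma stirling2_eq (m r : ℕ) : stirling2 m r = T m r / r.factorial := by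
  rw [stirling2, T_eq]

lemma fwdDiff_fq (m : ℕ) :
    fwdDiff 1 (fq m) = ∑ t ∈ Finset.range m, ((m.choose t : ℚ)) • fq t := by
  funext n
  simp only [fwdDiff, fq, Finset.sum_apply, Pi.smul_apply, smul_eq_mul]
  push_cast
  rw [add_pow]
  rw [Finset.sum_range_succ]
  simp only [Nat.choose_self, Nat.cast_one, one_pow, Nat.sub_self, pow_zero, mul_one]
  rw [add_sub_cancel_right]
  apply Finset.sum_congr rfl
  intro t ht
  ring

lemma delta_iter_fq_eq_zero : ∀ m r : ℕ, m < r → (fwdDiff 1)^[r] (fq m) = 0 := by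
  intro m
  induction m using Nat.strong_induction_on with
  | _ m IH =>
    intro r hr
    obtain ⟨s, rfl⟩ : ∃ s, r = s + 1 := ⟨r - 1, by omega⟩
    rw [Function.iterate_succ_apply, fwdDiff_fq, fwdDiff_iter_finset_sum]
    apply Finset.sum_eq_zero
    intro t ht
    rw [fwdDiff_iter_const_smul, IH t (Finset.mem_range.mp ht) s (by
      have := Finset.mem_range.mp ht; omega), smul_zero]

lemma T_eq_zero {m r : ℕ} (h : m < r) : T m r = 0 := by
  rw [T, delta_iter_fq_eq_zero m r h]; rfl

lemma stirling2_eq_zero {m r : ℕ} (h : m < r) : stirling2 m r = 0 := by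
  rw [stirling2_eq, T_eq_zero h, zero_div]

lemma newton_nat (N m : ℕ) :
    ((N : ℚ)) ^ m = ∑ j ∈ Finset.range (m + 1), (N.choose j : ℚ) * T m j := by
  have h1 := shift_eq_sum_fwdDiff_iter (1 : ℕ) (fq m) N 0
  simp only [zero_add, smul_eq_mul, mul_one, nsmul_eq_mul, fq] at h1
  have e1 : ∑ j ∈ Finset.range (m + 1), (N.choose j : ℚ) * T m j
      = ∑ j ∈ Finset.range (max m N + 1), (N.choose j : ℚ) * T m j := by
    apply Finset.sum_subset
    · apply Finset.range_subset_range.mpr; omega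
    · intro j hj hj'
      simp only [Finset.mem_range] at hj hj'
      rw [T_eq_zero (by omega), mul_zero]
  have e2 : ∑ j ∈ Finset.range (N + 1), (N.choose j : ℚ) * T m j
      = ∑ j ∈ Finset.range (max m N + 1), (N.choose j : ℚ) * T m j := by
    apply Finset.sum_subset
    · apply Finset.range_subset_range.mpr; omega
    · intro j hj hj'
      simp only [Finset.mem_range] at hj hj'
      rw [Nat.choose_eq_zero_of_lt (by omega), Nat.cast_zero, zero_mul]
  rw [e1, ← e2, h1]
  apply Finset.sum_congr rfl
  intro j hj
  rfl

lemma prod_choose (N : ℕ) : ∀ j : ℕ,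
    ∏ i ∈ Finset.range j, ((N : ℚ) - i) = (N.choose j : ℚ) * j.factorial := by
  intro j
  induction j with
  | zero => simp
  | succ j IH =>
    rw [Finset.prod_range_succ, IH]
    rcases lt_trichotomy j N with h | h | h
    · have hc : (N : ℚ) - j = ((N - j : ℕ) : ℚ) := by
        push_cast [Nat.cast_sub h.le]; ring
      rw [hc]
      have : N.choose j * j.factorial * (N - j) = N.choose (j+1) * (j+1).factorial := by
        rw [Nat.factorial_succ]
        calc N.choose j * j.factorial * (N - j) = N.choose j * (N - j) * j.factorial := by ring
        _ = N.choose (j+1) * (j+1) * j.factorial := by rw [← Nat.choose_succ_right_eq]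
        _ = N.choose (j+1) * ((j+1) * j.factorial) := by ring
      exact_mod_cast this
    · subst h
      simp [Nat.choose_succ_self]
    · rw [Nat.choose_eq_zero_of_lt h, Nat.choose_eq_zero_of_lt (by omega)]
      simp


open Polynomial in
lemma poly_newton (m : ℕ) :
    (Polynomial.X : Polynomial ℚ) ^ m = ∑ j ∈ Finset.range (m + 1),
      Polynomial.C (stirling2 m j) * ∏ i ∈ Finset.range j, (Polynomial.X - Polynomial.C (i : ℚ)) := by
  apply Polynomial.eq_of_infinite_eval_eq
  apply Set.Infinite.mono (s := Set.range (Nat.cast : ℕ → ℚ))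
  · rintro _ ⟨N, rfl⟩
    simp only [Set.mem_setOf_eq, eval_pow, eval_X, eval_finset_sum, eval_mul, eval_C,
      eval_prod, eval_sub, eval_natCast]
    rw [newton_nat N m]
    apply Finset.sum_congr rfl
    intro j hj
    rw [stirling2_eq, prod_choose]
    have hf : (j.factorial : ℚ) ≠ 0 := Nat.cast_ne_zero.mpr j.factorial_ne_zero
    field_simp
  · exact Set.infinite_range_of_injective Nat.cast_injective

lemma rat_newton (q : ℚ) (m : ℕ) :
    q ^ m = ∑ j ∈ Finset.range (m + 1),
      stirling2 m j * ∏ i ∈ Finset.range j, (q - (i : ℚ)) := by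
  have h := congrArg (Polynomial.eval q) (poly_newton m)
  simpa [Polynomial.eval_finset_sum, Polynomial.eval_prod, Polynomial.eval_mul,
    Polynomial.eval_sub, Polynomial.eval_pow, Polynomial.eval_C, Polynomial.eval_X,
    Polynomial.eval_natCast] using h

open Polynomial in
lemma polyX_newton (lam : ℚ) (m : ℕ) :
    (Polynomial.C lam * Polynomial.X : Polynomial ℚ) ^ m = ∑ j ∈ Finset.range (m + 1),
      Polynomial.C (stirling2 m j) *
        ∏ i ∈ Finset.range j, (Polynomial.C lam * Polynomial.X - Polynomial.C (i : ℚ)) := by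
  have h := congrArg (Polynomial.aeval (Polynomial.C lam * Polynomial.X : Polynomial ℚ))
    (poly_newton m)
  simpa [map_pow, map_sum, map_mul, map_prod, map_sub, Polynomial.aeval_X, Polynomial.aeval_C,
    Polynomial.algebraMap_eq] using h

lemma iter_shift (r : ℕ) : ∀ (f : ℕ → ℚ) (y x : ℕ),
    (fwdDiff 1)^[r] f (y + x) = (fwdDiff 1)^[r] (fun z => f (y + z)) x := by
  induction r with
  | zero => intro f y x; simp
  | succ r IH =>
    intro f y x
    rw [Function.iterate_succ_apply, Function.iterate_succ_apply, IH (fwdDiff 1 f) y x]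
    have hfg : (fun z => fwdDiff 1 f (y + z)) = fwdDiff 1 (fun z => f (y + z)) := by
      funext z
      simp [fwdDiff, Nat.add_assoc]
    rw [hfg]

lemma stepA (m r y : ℕ) :
    (fwdDiff 1)^[r] (fq m) y = ∑ k ∈ Finset.range (m + 1),
      (m.choose k : ℚ) * (y : ℚ) ^ (m - k) * T k r := by
  have h0 : (fwdDiff 1)^[r] (fq m) y = (fwdDiff 1)^[r] (fun z => fq m (y + z)) 0 := by
    rw [← iter_shift r (fq m) y 0, add_zero]
  have hfun : (fun z => fq m (y + z)) = ∑ k ∈ Finset.range (m + 1),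
      ((m.choose k : ℚ) * (y : ℚ) ^ (m - k)) • fq k := by
    funext z
    simp only [fq, Finset.sum_apply, Pi.smul_apply, smul_eq_mul]
    push_cast
    rw [add_comm (y:ℚ) (z:ℚ), add_pow]
    exact Finset.sum_congr rfl fun k hk => by ring
  rw [h0, hfun, fwdDiff_iter_finset_sum]
  simp only [fwdDiff_iter_const_smul, Finset.sum_apply, Pi.smul_apply, smul_eq_mul, T]

lemma starstar' (r d m : ℕ) :
    ∑ k ∈ Finset.range (m + 1), (m.choose k : ℚ) * T k r * T (m - k) d = T m (r + d) := by
  have h1 : T m (r + d) = (fwdDiff 1)^[d] ((fwdDiff 1)^[r] (fq m)) 0 := by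
    rw [T, add_comm r d, Function.iterate_add_apply]
  have h2 : (fwdDiff 1)^[r] (fq m) = ∑ k ∈ Finset.range (m + 1),
      ((m.choose k : ℚ) * T k r) • fq (m - k) := by
    funext y
    rw [stepA]
    simp only [Finset.sum_apply, Pi.smul_apply, smul_eq_mul, fq]
    apply Finset.sum_congr rfl
    intro k hk
    ring
  rw [h1, h2, fwdDiff_iter_finset_sum]
  simp only [fwdDiff_iter_const_smul, Finset.sum_apply, Pi.smul_apply, smul_eq_mul, T]

lemma starstar (m b d : ℕ) :
    (((b + d).choose b : ℚ)) * stirling2 m (b + d) =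
      ∑ k ∈ Finset.range (m + 1), (m.choose k : ℚ) * stirling2 k b * stirling2 (m - k) d := by
  have key : (((b + d).choose b : ℚ)) * b.factorial * d.factorial = (b + d).factorial := by
    have := Nat.choose_mul_factorial_mul_factorial (Nat.le_add_right b d)
    rw [Nat.add_sub_cancel_left] at this
    exact_mod_cast this
  have h := starstar' b d m
  have hrw : ∑ k ∈ Finset.range (m + 1), (m.choose k : ℚ) * stirling2 k b * stirling2 (m - k) d
      = (∑ k ∈ Finset.range (m + 1), (m.choose k : ℚ) * T k b * T (m - k) d)
          * ((b.factorial : ℚ) * d.factorial)⁻¹ := by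
    rw [Finset.sum_mul]
    apply Finset.sum_congr rfl
    intro k hk
    rw [stirling2_eq, stirling2_eq]
    field_simp
  rw [hrw, h, stirling2_eq]
  have hb : (b.factorial : ℚ) ≠ 0 := Nat.cast_ne_zero.mpr b.factorial_ne_zero
  have hd : (d.factorial : ℚ) ≠ 0 := Nat.cast_ne_zero.mpr d.factorial_ne_zero
  have hbd : ((b + d).factorial : ℚ) ≠ 0 := Nat.cast_ne_zero.mpr (b + d).factorial_ne_zero
  field_simp
  linear_combination T m (b + d) * key

lemma star (lam : ℚ) (m b : ℕ) (hb : b ≤ m) :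
    ∑ j ∈ Finset.range (m + 1),
        stirling2 m j * (j.choose b : ℚ) * ∏ i ∈ Finset.range (j - b), (lam - (i : ℚ)) =
      ∑ k ∈ Finset.range (m + 1), (m.choose k : ℚ) * lam ^ (m - k) * stirling2 k b := by
  have hRHS : ∑ k ∈ Finset.range (m + 1), (m.choose k : ℚ) * lam ^ (m - k) * stirling2 k b
      = ∑ d ∈ Finset.range (m + 1), (((b + d).choose b : ℚ)) * stirling2 m (b + d)
          * ∏ i ∈ Finset.range d, (lam - (i : ℚ)) := by
    have e1 : ∀ k ∈ Finset.range (m + 1),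
        (m.choose k : ℚ) * lam ^ (m - k) * stirling2 k b
          = ∑ d ∈ Finset.range (m + 1), (m.choose k : ℚ) * stirling2 k b * stirling2 (m - k) d
              * ∏ i ∈ Finset.range d, (lam - (i : ℚ)) := by
      intro k hk
      rw [rat_newton lam (m - k)]
      have e2 : ∑ d ∈ Finset.range (m - k + 1),
            stirling2 (m - k) d * ∏ i ∈ Finset.range d, (lam - (i : ℚ))
          = ∑ d ∈ Finset.range (m + 1),
            stirling2 (m - k) d * ∏ i ∈ Finset.range d, (lam - (i : ℚ)) := by
        apply Finset.sum_subset
        · apply Finset.range_subset_range.mpr; omega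
        · intro d hd hd'
          simp only [Finset.mem_range] at hd hd'
          rw [stirling2_eq_zero (by omega), zero_mul]
      rw [e2, Finset.mul_sum, Finset.sum_mul]
      apply Finset.sum_congr rfl
      intro d hd
      ring
    rw [Finset.sum_congr rfl e1, Finset.sum_comm]
    apply Finset.sum_congr rfl
    intro d hd
    rw [← Finset.sum_mul, ← starstar m b d]
  rw [hRHS]
  have hLHS : ∑ j ∈ Finset.range (m + 1),
      stirling2 m j * (j.choose b : ℚ) * ∏ i ∈ Finset.range (j - b), (lam - (i : ℚ))
      = ∑ j ∈ Finset.Ico b (m + 1),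
        stirling2 m j * (j.choose b : ℚ) * ∏ i ∈ Finset.range (j - b), (lam - (i : ℚ)) := by
    symm
    apply Finset.sum_subset
    · intro x hx
      simp only [Finset.mem_Ico] at hx
      exact Finset.mem_range.mpr hx.2
    · intro j hj hj'
      simp only [Finset.mem_range] at hj
      simp only [Finset.mem_Ico] at hj'
      rw [Nat.choose_eq_zero_of_lt (by omega), Nat.cast_zero, mul_zero, zero_mul]
  rw [hLHS, Finset.sum_Ico_eq_sum_range]
  have e3 : ∀ d ∈ Finset.range (m + 1 - b),
      stirling2 m (b + d) * ((b + d).choose b : ℚ)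
          * ∏ i ∈ Finset.range (b + d - b), (lam - (i : ℚ))
        = (((b + d).choose b : ℚ)) * stirling2 m (b + d)
          * ∏ i ∈ Finset.range d, (lam - (i : ℚ)) := by
    intro d hd
    rw [Nat.add_sub_cancel_left]
    ring
  rw [Finset.sum_congr rfl e3]
  apply Finset.sum_subset
  · apply Finset.range_subset_range.mpr; omega
  · intro d hd hd'
    simp only [Finset.mem_range] at hd hd'
    rw [stirling2_eq_zero (by omega), mul_zero, zero_mul]


open Polynomial

lemma coeff_extract {f g e : ℕ → Polynomial ℚ}
    (h : (2 : PowerSeries (Polynomial ℚ)) * PowerSeries.mk f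
      = (PowerSeries.mk g + 1) * PowerSeries.mk e) (n : ℕ) :
    f n + f n = (∑ k ∈ Finset.range (n + 1), g k * e (n - k)) + e n := by
  have h2 : PowerSeries.mk f + PowerSeries.mk f
      = PowerSeries.mk g * PowerSeries.mk e + PowerSeries.mk e := by
    calc PowerSeries.mk f + PowerSeries.mk f
        = (2 : PowerSeries (Polynomial ℚ)) * PowerSeries.mk f := by ring
      _ = (PowerSeries.mk g + 1) * PowerSeries.mk e := h
      _ = PowerSeries.mk g * PowerSeries.mk e + PowerSeries.mk e := by ring
  have h3 := congrArg (PowerSeries.coeff (R := Polynomial ℚ) n) h2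
  simp only [map_add, PowerSeries.coeff_mk, PowerSeries.coeff_mul] at h3
  rw [Finset.Nat.sum_antidiagonal_eq_sum_range_succ_mk] at h3
  simpa using h3

lemma reflect_sum (n : ℕ) (c c' : ℕ → ℚ) (P : ℕ → Polynomial ℚ)
    (hc : ∀ b ≤ n, c (n - b) = c' b) :
    ∑ k ∈ Finset.range (n + 1), Polynomial.C (c k) * P (n - k)
      = ∑ b ∈ Finset.range (n + 1), Polynomial.C (c' b) * P b := by
  rw [← Finset.sum_range_reflect]
  apply Finset.sum_congr rfl
  intro b hb
  have hb' : b ≤ n := by simpa [Nat.lt_succ_iff] using hb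
  rw [show n + 1 - 1 - b = n - b by omega, hc b hb', Nat.sub_sub_self hb']

lemma cleanE {E : ℕ → Polynomial ℚ}
    (hE : 2 * (PowerSeries.mk fun m =>
        Polynomial.C ((m.factorial : ℚ))⁻¹ * Polynomial.X ^ m) =
      ((PowerSeries.mk fun m => (Polynomial.C ((m.factorial : ℚ))⁻¹ : Polynomial ℚ)) + 1) *
        PowerSeries.mk fun m => Polynomial.C ((m.factorial : ℚ))⁻¹ * E m) (n : ℕ) :
    2 * Polynomial.X ^ n
      = E n + ∑ b ∈ Finset.range (n + 1), Polynomial.C ((n.choose b : ℚ)) * E b := by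
  have h := coeff_extract hE n
  have h2 := congrArg (fun p => Polynomial.C ((n.factorial : ℚ)) * p) h
  simp only [mul_add, Finset.mul_sum] at h2
  have hnf : (n.factorial : ℚ) ≠ 0 := Nat.cast_ne_zero.mpr n.factorial_ne_zero
  have e0 : Polynomial.C ((n.factorial : ℚ)) * (Polynomial.C ((n.factorial : ℚ))⁻¹
      * Polynomial.X ^ n) = Polynomial.X ^ n := by
    rw [← mul_assoc, ← Polynomial.C_mul, mul_inv_cancel₀ hnf, Polynomial.C_1, one_mul]
  have e1 : Polynomial.C ((n.factorial : ℚ)) * (Polynomial.C ((n.factorial : ℚ))⁻¹ * E n)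
      = E n := by
    rw [← mul_assoc, ← Polynomial.C_mul, mul_inv_cancel₀ hnf, Polynomial.C_1, one_mul]
  rw [e0, e1] at h2
  have e2 : ∀ k ∈ Finset.range (n + 1),
      Polynomial.C ((n.factorial : ℚ)) * (Polynomial.C ((k.factorial : ℚ))⁻¹
        * (Polynomial.C (((n - k).factorial : ℚ))⁻¹ * E (n - k)))
      = Polynomial.C ((n.choose k : ℚ)) * E (n - k) := by
    intro k hk
    have hk' : k ≤ n := by simpa [Nat.lt_succ_iff] using hk
    rw [← mul_assoc, ← mul_assoc, ← Polynomial.C_mul, ← Polynomial.C_mul]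
    congr 2
    rw [Nat.cast_choose ℚ hk']
    have h1 : (k.factorial : ℚ) ≠ 0 := Nat.cast_ne_zero.mpr k.factorial_ne_zero
    have h2 : ((n - k).factorial : ℚ) ≠ 0 := Nat.cast_ne_zero.mpr (n - k).factorial_ne_zero
    field_simp
  rw [Finset.sum_congr rfl e2] at h2
  rw [reflect_sum n (fun k => ((n.choose k : ℕ) : ℚ)) (fun k => ((n.choose k : ℕ) : ℚ)) E
    (fun b hb => by simp only [Nat.choose_symm hb])] at h2
  rw [two_mul]
  rw [h2]
  ring

lemma cleanCh {lam : ℚ} {Ch : ℕ → Polynomial ℚ}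
    (hCh : 2 * (PowerSeries.mk fun n =>
        Polynomial.C ((n.factorial : ℚ))⁻¹ *
          ∏ i ∈ Finset.range n, (Polynomial.C lam * Polynomial.X - Polynomial.C (i : ℚ))) =
      ((PowerSeries.mk fun n =>
          (Polynomial.C ((∏ i ∈ Finset.range n, (lam - i)) / (n.factorial : ℚ)) :
            Polynomial ℚ)) + 1) *
        PowerSeries.mk fun n => Polynomial.C ((n.factorial : ℚ))⁻¹ * Ch n) (n : ℕ) :
    2 * ∏ i ∈ Finset.range n, (Polynomial.C lam * Polynomial.X - Polynomial.C (i : ℚ))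
      = Ch n + ∑ b ∈ Finset.range (n + 1),
          Polynomial.C ((n.choose b : ℚ) * ∏ i ∈ Finset.range (n - b), (lam - (i : ℚ))) * Ch b := by
  have h := coeff_extract hCh n
  have h2 := congrArg (fun p => Polynomial.C ((n.factorial : ℚ)) * p) h
  simp only [mul_add, Finset.mul_sum] at h2
  have hnf : (n.factorial : ℚ) ≠ 0 := Nat.cast_ne_zero.mpr n.factorial_ne_zero
  have e0 : Polynomial.C ((n.factorial : ℚ)) * (Polynomial.C ((n.factorial : ℚ))⁻¹
      * ∏ i ∈ Finset.range n, (Polynomial.C lam * Polynomial.X - Polynomial.C (i : ℚ)))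
      = ∏ i ∈ Finset.range n, (Polynomial.C lam * Polynomial.X - Polynomial.C (i : ℚ)) := by
    rw [← mul_assoc, ← Polynomial.C_mul, mul_inv_cancel₀ hnf, Polynomial.C_1, one_mul]
  have e1 : Polynomial.C ((n.factorial : ℚ)) * (Polynomial.C ((n.factorial : ℚ))⁻¹ * Ch n)
      = Ch n := by
    rw [← mul_assoc, ← Polynomial.C_mul, mul_inv_cancel₀ hnf, Polynomial.C_1, one_mul]
  rw [e0, e1] at h2
  have e2 : ∀ k ∈ Finset.range (n + 1),
      Polynomial.C ((n.factorial : ℚ)) *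
        (Polynomial.C ((∏ i ∈ Finset.range k, (lam - i)) / (k.factorial : ℚ))
          * (Polynomial.C (((n - k).factorial : ℚ))⁻¹ * Ch (n - k)))
      = Polynomial.C ((n.choose k : ℚ) * ∏ i ∈ Finset.range k, (lam - (i : ℚ))) * Ch (n - k) := by
    intro k hk
    have hk' : k ≤ n := by simpa [Nat.lt_succ_iff] using hk
    rw [← mul_assoc, ← mul_assoc, ← Polynomial.C_mul, ← Polynomial.C_mul]
    congr 2
    rw [Nat.cast_choose ℚ hk']
    have h1 : (k.factorial : ℚ) ≠ 0 := Nat.cast_ne_zero.mpr k.factorial_ne_zero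
    have h2 : ((n - k).factorial : ℚ) ≠ 0 := Nat.cast_ne_zero.mpr (n - k).factorial_ne_zero
    field_simp
  rw [Finset.sum_congr rfl e2] at h2
  rw [reflect_sum n (fun k => (n.choose k : ℚ) * ∏ i ∈ Finset.range k, (lam - (i : ℚ)))
    (fun b => (n.choose b : ℚ) * ∏ i ∈ Finset.range (n - b), (lam - (i : ℚ))) Ch
    (fun b hb => by simp only [Nat.choose_symm hb])] at h2
  rw [two_mul, h2]
  ring

lemma key2 (lam : ℚ) (Ch : ℕ → Polynomial ℚ)
    (hCh' : ∀ n, 2 * ∏ i ∈ Finset.range n, (Polynomial.C lam * Polynomial.X - Polynomial.C (i : ℚ))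
      = Ch n + ∑ b ∈ Finset.range (n + 1),
          Polynomial.C ((n.choose b : ℚ) * ∏ i ∈ Finset.range (n - b), (lam - (i : ℚ))) * Ch b)
    (m : ℕ) :
    2 * (Polynomial.C lam * Polynomial.X) ^ m
      = (∑ n ∈ Finset.range (m + 1), Polynomial.C (stirling2 m n) * Ch n)
        + ∑ b ∈ Finset.range (m + 1),
            Polynomial.C ((m.choose b : ℚ) * lam ^ (m - b)) *
              ∑ r ∈ Finset.range (b + 1), Polynomial.C (stirling2 b r) * Ch r := by
  have hL : 2 * (Polynomial.C lam * Polynomial.X) ^ m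
      = (∑ n ∈ Finset.range (m + 1), Polynomial.C (stirling2 m n) * Ch n)
        + ∑ b ∈ Finset.range (m + 1),
            Polynomial.C (∑ j ∈ Finset.range (m + 1), stirling2 m j *
              (j.choose b : ℚ) * ∏ i ∈ Finset.range (j - b), (lam - (i : ℚ))) * Ch b := by
    rw [polyX_newton lam m, Finset.mul_sum]
    have e1 : ∀ j ∈ Finset.range (m + 1),
        2 * (Polynomial.C (stirling2 m j)
            * ∏ i ∈ Finset.range j, (Polynomial.C lam * Polynomial.X - Polynomial.C (i : ℚ)))
        = Polynomial.C (stirling2 m j) * Ch j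
          + ∑ b ∈ Finset.range (m + 1), Polynomial.C (stirling2 m j *
              (j.choose b : ℚ) * ∏ i ∈ Finset.range (j - b), (lam - (i : ℚ))) * Ch b := by
      intro j hj
      have hj' : j ≤ m := by simpa [Nat.lt_succ_iff] using hj
      have expand : ∑ b ∈ Finset.range (j + 1),
            Polynomial.C ((j.choose b : ℚ) * ∏ i ∈ Finset.range (j - b), (lam - (i : ℚ))) * Ch b
          = ∑ b ∈ Finset.range (m + 1),
            Polynomial.C ((j.choose b : ℚ) * ∏ i ∈ Finset.range (j - b), (lam - (i : ℚ))) * Ch b := by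
        apply Finset.sum_subset
        · apply Finset.range_subset_range.mpr; omega
        · intro b hb hb'
          simp only [Finset.mem_range] at hb hb'
          rw [Nat.choose_eq_zero_of_lt (by omega), Nat.cast_zero, zero_mul, Polynomial.C_0,
            zero_mul]
      calc 2 * (Polynomial.C (stirling2 m j)
            * ∏ i ∈ Finset.range j, (Polynomial.C lam * Polynomial.X - Polynomial.C (i : ℚ)))
          = Polynomial.C (stirling2 m j) * (2 * ∏ i ∈ Finset.range j,
              (Polynomial.C lam * Polynomial.X - Polynomial.C (i : ℚ))) := by ring
        _ = Polynomial.C (stirling2 m j) * (Ch j + ∑ b ∈ Finset.range (m + 1),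
              Polynomial.C ((j.choose b : ℚ) * ∏ i ∈ Finset.range (j - b), (lam - (i : ℚ)))
                * Ch b) := by rw [hCh' j, expand]
        _ = Polynomial.C (stirling2 m j) * Ch j + ∑ b ∈ Finset.range (m + 1),
              Polynomial.C (stirling2 m j *
                (j.choose b : ℚ) * ∏ i ∈ Finset.range (j - b), (lam - (i : ℚ))) * Ch b := by
            rw [mul_add, Finset.mul_sum]
            congr 1
            apply Finset.sum_congr rfl
            intro b hb
            simp only [Polynomial.C_mul]
            ring
    rw [Finset.sum_congr rfl e1, Finset.sum_add_distrib]
    congr 1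
    rw [Finset.sum_comm]
    apply Finset.sum_congr rfl
    intro b hb
    rw [map_sum, Finset.sum_mul]
  have hR : ∑ b ∈ Finset.range (m + 1),
        Polynomial.C ((m.choose b : ℚ) * lam ^ (m - b)) *
          ∑ r ∈ Finset.range (b + 1), Polynomial.C (stirling2 b r) * Ch r
      = ∑ r ∈ Finset.range (m + 1),
          Polynomial.C (∑ b ∈ Finset.range (m + 1),
            (m.choose b : ℚ) * lam ^ (m - b) * stirling2 b r) * Ch r := by
    have e2 : ∀ b ∈ Finset.range (m + 1),
        Polynomial.C ((m.choose b : ℚ) * lam ^ (m - b)) *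
            ∑ r ∈ Finset.range (b + 1), Polynomial.C (stirling2 b r) * Ch r
          = ∑ r ∈ Finset.range (m + 1),
              Polynomial.C ((m.choose b : ℚ) * lam ^ (m - b) * stirling2 b r) * Ch r := by
      intro b hb
      have hb' : b ≤ m := by simpa [Nat.lt_succ_iff] using hb
      have expand2 : ∑ r ∈ Finset.range (b + 1), Polynomial.C (stirling2 b r) * Ch r
          = ∑ r ∈ Finset.range (m + 1), Polynomial.C (stirling2 b r) * Ch r := by
        apply Finset.sum_subset
        · apply Finset.range_subset_range.mpr; omega
        · intro r hr hr'
          simp only [Finset.mem_range] at hr hr'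
          rw [stirling2_eq_zero (by omega), Polynomial.C_0, zero_mul]
      rw [expand2, Finset.mul_sum]
      apply Finset.sum_congr rfl
      intro r hr
      simp only [Polynomial.C_mul]
      ring
    rw [Finset.sum_congr rfl e2, Finset.sum_comm]
    apply Finset.sum_congr rfl
    intro r hr
    rw [map_sum, Finset.sum_mul]
  rw [hL, hR]
  congr 1
  apply Finset.sum_congr rfl
  intro b hb
  have hb' : b ≤ m := by simpa [Nat.lt_succ_iff] using hb
  rw [star lam m b hb']

end ChangheeAux

/-- If `E` is the sequence of Euler polynomials, `2e^{xt}/(e^t+1) = ∑ E_m(x) t^m/m!`, and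
`Ch` the sequence of `λ`-Changhee polynomials, `2(1+t)^{λx}/((1+t)^λ+1) = ∑ Ch_{n,λ}(x) t^n/n!`
(with `(1+t)^λ` the binomial series), then `E_m(x) = λ^{-m} ∑_{n=0}^m Ch_{n,λ}(x) S₂(m,n)`. -/
theorem eulerPoly_eq_sum_changhee_stirling2 (lam : ℚ) (hlam : lam ≠ 0)
    (E Ch : ℕ → Polynomial ℚ)
    (hE : 2 * (PowerSeries.mk fun m =>
        Polynomial.C ((m.factorial : ℚ))⁻¹ * Polynomial.X ^ m) =
      ((PowerSeries.mk fun m => (Polynomial.C ((m.factorial : ℚ))⁻¹ : Polynomial ℚ)) + 1) *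
        PowerSeries.mk fun m => Polynomial.C ((m.factorial : ℚ))⁻¹ * E m)
    (hCh : 2 * (PowerSeries.mk fun n =>
        Polynomial.C ((n.factorial : ℚ))⁻¹ *
          ∏ i ∈ Finset.range n, (Polynomial.C lam * Polynomial.X - Polynomial.C (i : ℚ))) =
      ((PowerSeries.mk fun n =>
          (Polynomial.C ((∏ i ∈ Finset.range n, (lam - i)) / (n.factorial : ℚ)) :
            Polynomial ℚ)) + 1) *
        PowerSeries.mk fun n => Polynomial.C ((n.factorial : ℚ))⁻¹ * Ch n)
    (m : ℕ) :
    E m = Polynomial.C ((lam ^ m)⁻¹) *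
      ∑ n ∈ Finset.range (m + 1), Polynomial.C (stirling2 m n) * Ch n := by
  have hE' := ChangheeAux.cleanE hE
  have hCh' := ChangheeAux.cleanCh hCh
  induction m using Nat.strong_induction_on with
  | _ m IH =>
    have hk := ChangheeAux.key2 lam Ch hCh' m
    have hlm : (lam ^ m : ℚ) ≠ 0 := pow_ne_zero _ hlam
    have hk2 : 2 * Polynomial.X ^ m
        = Polynomial.C ((lam ^ m)⁻¹) *
            (∑ n ∈ Finset.range (m + 1), Polynomial.C (stirling2 m n) * Ch n)
          + ∑ b ∈ Finset.range (m + 1), Polynomial.C ((m.choose b : ℚ)) *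
              (Polynomial.C ((lam ^ b)⁻¹) *
                ∑ r ∈ Finset.range (b + 1), Polynomial.C (stirling2 b r) * Ch r) := by
      have eL : Polynomial.C ((lam ^ m)⁻¹) * (2 * (Polynomial.C lam * Polynomial.X) ^ m)
          = 2 * Polynomial.X ^ m := by
        rw [mul_pow, ← Polynomial.C_pow]
        rw [show Polynomial.C ((lam ^ m)⁻¹) * (2 * (Polynomial.C (lam ^ m) * Polynomial.X ^ m))
            = 2 * (Polynomial.C ((lam ^ m)⁻¹) * Polynomial.C (lam ^ m)) * Polynomial.X ^ m
          from by ring]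
        rw [← Polynomial.C_mul, inv_mul_cancel₀ hlm, Polynomial.C_1]
        ring
      have eT : ∀ b ∈ Finset.range (m + 1),
          Polynomial.C ((lam ^ m)⁻¹) * (Polynomial.C ((m.choose b : ℚ) * lam ^ (m - b)) *
              ∑ r ∈ Finset.range (b + 1), Polynomial.C (stirling2 b r) * Ch r)
            = Polynomial.C ((m.choose b : ℚ)) * (Polynomial.C ((lam ^ b)⁻¹) *
              ∑ r ∈ Finset.range (b + 1), Polynomial.C (stirling2 b r) * Ch r) := by
        intro b hb
        have hb' : b ≤ m := by simpa [Nat.lt_succ_iff] using hb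
        have hpow : lam ^ (m - b) * lam ^ b = lam ^ m := by
          rw [← pow_add]; congr 1; omega
        have hcoef : (lam ^ m)⁻¹ * ((m.choose b : ℚ) * lam ^ (m - b))
            = (m.choose b : ℚ) * (lam ^ b)⁻¹ := by
          have hlb : (lam ^ b : ℚ) ≠ 0 := pow_ne_zero _ hlam
          field_simp
          linear_combination (m.choose b : ℚ) * hpow
        rw [← mul_assoc, ← Polynomial.C_mul, hcoef, Polynomial.C_mul, mul_assoc]
      have h3 : Polynomial.C ((lam ^ m)⁻¹) * (2 * (Polynomial.C lam * Polynomial.X) ^ m)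
          = Polynomial.C ((lam ^ m)⁻¹) *
              ((∑ n ∈ Finset.range (m + 1), Polynomial.C (stirling2 m n) * Ch n)
                + ∑ b ∈ Finset.range (m + 1),
                    Polynomial.C ((m.choose b : ℚ) * lam ^ (m - b)) *
                      ∑ r ∈ Finset.range (b + 1), Polynomial.C (stirling2 b r) * Ch r) := by
        rw [hk]
      have hdist : Polynomial.C ((lam ^ m)⁻¹) * (∑ b ∈ Finset.range (m + 1),
            Polynomial.C ((m.choose b : ℚ) * lam ^ (m - b)) *
              ∑ r ∈ Finset.range (b + 1), Polynomial.C (stirling2 b r) * Ch r)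
          = ∑ b ∈ Finset.range (m + 1), Polynomial.C ((lam ^ m)⁻¹) *
              (Polynomial.C ((m.choose b : ℚ) * lam ^ (m - b)) *
                ∑ r ∈ Finset.range (b + 1), Polynomial.C (stirling2 b r) * Ch r) :=
        Finset.mul_sum _ _ _
      rw [eL, mul_add, hdist, Finset.sum_congr rfl eT] at h3
      exact h3
    have hEm := hE' m
    rw [Finset.sum_range_succ, Nat.choose_self, Nat.cast_one, Polynomial.C_1, one_mul] at hEm
    have hsplit := Finset.sum_range_succ (fun b => Polynomial.C ((m.choose b : ℚ)) *
      (Polynomial.C ((lam ^ b)⁻¹) *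
        ∑ r ∈ Finset.range (b + 1), Polynomial.C (stirling2 b r) * Ch r)) m
    rw [hsplit, Nat.choose_self, Nat.cast_one, Polynomial.C_1, one_mul] at hk2
    have hS : ∑ b ∈ Finset.range m, Polynomial.C ((m.choose b : ℚ)) * E b
        = ∑ b ∈ Finset.range m, Polynomial.C ((m.choose b : ℚ)) *
            (Polynomial.C ((lam ^ b)⁻¹) *
              ∑ r ∈ Finset.range (b + 1), Polynomial.C (stirling2 b r) * Ch r) := by
      apply Finset.sum_congr rfl
      intro b hb
      rw [IH b (Finset.mem_range.mp hb)]
    have h2 : E m + E m = Polynomial.C ((lam ^ m)⁻¹) *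
          (∑ n ∈ Finset.range (m + 1), Polynomial.C (stirling2 m n) * Ch n)
        + Polynomial.C ((lam ^ m)⁻¹) *
          (∑ n ∈ Finset.range (m + 1), Polynomial.C (stirling2 m n) * Ch n) := by
      linear_combination hk2 - hEm - hS
    have h2ne : (2 : Polynomial ℚ) ≠ 0 := by
      intro h
      have := congrArg (Polynomial.eval 0) h
      norm_num at this
    apply mul_left_cancel₀ h2ne
    linear_combination h2
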